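/- Let 0 < α < 1 and define g(x) = (1 + |x|²)^{-α} for x ∈ ℝ². Then there exists a constant C depending only on α such that the Hardy–Littlewood maximal function of g satisfies Mg(x) ≤ C · g(x) for all x ∈ ℝ². -/
import Mathlib

open MeasureTheory Metric

noncomputable def maximalFn (f : EuclideanSpace ℝ (Fin 2) → ℝ) (x : EuclideanSpace ℝ (Fin 2)) : ℝ :=
  ⨆ (r : ℝ) (_ : 0 < r), (1 / r ^ 2) * ∫ y in ball x r, |f y|

section aux

open Set Real ENNReal

local notation "E2" => EuclideanSpace ℝ (Fin 2)

lemma aux_finrank : Module.finrank ℝ E2 = 2 := by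
  simp [finrank_euclideanSpace]

lemma aux_key (α : ℝ) (hα0 : 0 < α) (hα1 : α < 1) {R : ℝ} (hR : 0 < R) :
    ∫⁻ y in ball (0 : E2) R, ENNReal.ofReal (‖y‖ ^ (-(2*α))) ≤
      ENNReal.ofReal ((volume (ball (0:E2) 1)).toReal * (1 + (α⁻¹ - 1)⁻¹) * R ^ (2 - 2*α)) := by
  set Bv : ℝ := (volume (ball (0:E2) 1)).toReal with hBv
  have hvB : volume (ball (0:E2) 1) = ENNReal.ofReal Bv :=
    (ENNReal.ofReal_toReal measure_ball_lt_top.ne).symm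
  have hBv0 : 0 ≤ Bv := ENNReal.toReal_nonneg
  have h1p : 1 < α⁻¹ := by
    have h := mul_inv_cancel₀ hα0.ne'
    nlinarith [inv_pos.mpr hα0]
  have hc2 : (0:ℝ) ≤ (α⁻¹ - 1)⁻¹ := inv_nonneg.mpr (by linarith)
  set T : ℝ := R ^ (-(2*α)) with hTdef
  have hT0 : 0 < T := Real.rpow_pos_of_pos hR _
  have hmeas : Measurable fun y : E2 => ‖y‖ ^ (-(2*α)) := by fun_prop
  have hRexp : 0 ≤ R ^ (2 - 2*α) := Real.rpow_nonneg hR.le _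
  -- layer cake
  rw [lintegral_eq_lintegral_meas_le _
    (Filter.Eventually.of_forall fun y => Real.rpow_nonneg (norm_nonneg y) _)
    hmeas.aemeasurable]
  have part1 : ∫⁻ t in Ioc (0:ℝ) T,
      (volume.restrict (ball (0:E2) R)) {a | t ≤ ‖a‖ ^ (-(2*α))} ≤
      ENNReal.ofReal (Bv * R ^ (2 - 2*α)) := by
    have hb : ∀ t ∈ Ioc (0:ℝ) T,
        (volume.restrict (ball (0:E2) R)) {a | t ≤ ‖a‖ ^ (-(2*α))} ≤
        ENNReal.ofReal (R ^ 2) * ENNReal.ofReal Bv := by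
      intro t _
      calc (volume.restrict (ball (0:E2) R)) {a | t ≤ ‖a‖ ^ (-(2*α))}
          ≤ (volume.restrict (ball (0:E2) R)) Set.univ := measure_mono (subset_univ _)
        _ = volume (ball (0:E2) R) := Measure.restrict_apply_univ _
        _ = ENNReal.ofReal (R ^ 2) * ENNReal.ofReal Bv := by
            rw [Measure.addHaar_ball volume (0:E2) hR.le, aux_finrank, hvB]
    calc ∫⁻ t in Ioc (0:ℝ) T, (volume.restrict (ball (0:E2) R)) {a | t ≤ ‖a‖ ^ (-(2*α))}
        ≤ ∫⁻ _ in Ioc (0:ℝ) T, ENNReal.ofReal (R ^ 2) * ENNReal.ofReal Bv :=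
          setLIntegral_mono' measurableSet_Ioc hb
      _ = ENNReal.ofReal (R ^ 2) * ENNReal.ofReal Bv * volume (Ioc (0:ℝ) T) :=
          setLIntegral_const _ _
      _ = ENNReal.ofReal (R ^ 2) * ENNReal.ofReal Bv * ENNReal.ofReal T := by
          rw [Real.volume_Ioc, sub_zero]
      _ = ENNReal.ofReal (Bv * R ^ (2 - 2*α)) := by
          rw [← ENNReal.ofReal_mul (by positivity), ← ENNReal.ofReal_mul (by positivity)]
          congr 1
          have : (R:ℝ) ^ 2 * T = R ^ (2 - 2*α) := by
            rw [show (2:ℝ) - 2*α = 2 + -(2*α) by ring, hTdef,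
              ← Real.rpow_natCast R 2, ← Real.rpow_add hR]
            norm_num
          nlinarith [this]
  have part2 : ∫⁻ t in Ioi T,
      (volume.restrict (ball (0:E2) R)) {a | t ≤ ‖a‖ ^ (-(2*α))} ≤
      ENNReal.ofReal (Bv * ((α⁻¹ - 1)⁻¹ * R ^ (2 - 2*α))) := by
    have hb : ∀ t ∈ Ioi T,
        (volume.restrict (ball (0:E2) R)) {a | t ≤ ‖a‖ ^ (-(2*α))} ≤
        ENNReal.ofReal (t ^ (-α⁻¹)) * ENNReal.ofReal Bv := by
      intro t ht
      have ht0 : 0 < t := hT0.trans ht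
      have hsub : {a : E2 | t ≤ ‖a‖ ^ (-(2*α))} ⊆ closedBall (0:E2) (t ^ (-(2*α)⁻¹)) := by
        intro a ha
        rw [mem_closedBall_zero_iff]
        rcases eq_or_ne a 0 with rfl | ha0
        · simpa using Real.rpow_nonneg ht0.le _
        · have hna : 0 < ‖a‖ := norm_pos_iff.mpr ha0
          have h2 : (‖a‖ ^ (-(2*α))) ^ (-(2*α)⁻¹) ≤ t ^ (-(2*α)⁻¹) :=
            Real.rpow_le_rpow_of_nonpos ht0 ha
              (neg_nonpos.mpr (inv_nonneg.mpr (by linarith)))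
          have h3 : (‖a‖ ^ (-(2*α))) ^ (-(2*α)⁻¹) = ‖a‖ := by
            rw [← Real.rpow_mul (norm_nonneg a)]
            have : (-(2*α)) * (-(2*α)⁻¹) = 1 := by
              field_simp
            rw [this, Real.rpow_one]
          linarith [h3 ▸ h2]
      calc (volume.restrict (ball (0:E2) R)) {a : E2 | t ≤ ‖a‖ ^ (-(2*α))}
          ≤ volume {a : E2 | t ≤ ‖a‖ ^ (-(2*α))} :=
            Measure.restrict_le_self _ --(maybe needs le_iff)
        _ ≤ volume (closedBall (0:E2) (t ^ (-(2*α)⁻¹))) := measure_mono hsub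
        _ = ENNReal.ofReal ((t ^ (-(2*α)⁻¹)) ^ 2) * ENNReal.ofReal Bv := by
            rw [Measure.addHaar_closedBall volume (0:E2) (Real.rpow_nonneg ht0.le _),
              aux_finrank, hvB]
        _ = ENNReal.ofReal (t ^ (-α⁻¹)) * ENNReal.ofReal Bv := by
            congr 2
            rw [← Real.rpow_natCast (t ^ (-(2*α)⁻¹)) 2, ← Real.rpow_mul ht0.le]
            congr 1
            push_cast
            field_simp
    have hint : IntegrableOn (fun t : ℝ => t ^ (-α⁻¹)) (Ioi T) :=
      integrableOn_Ioi_rpow_of_lt (by linarith) hT0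
    have hnn : 0 ≤ᵐ[volume.restrict (Ioi T)] fun t : ℝ => t ^ (-α⁻¹) :=
      ae_restrict_of_forall_mem measurableSet_Ioi fun t ht =>
        Real.rpow_nonneg (hT0.trans ht).le _
    calc ∫⁻ t in Ioi T, (volume.restrict (ball (0:E2) R)) {a | t ≤ ‖a‖ ^ (-(2*α))}
        ≤ ∫⁻ t in Ioi T, ENNReal.ofReal (t ^ (-α⁻¹)) * ENNReal.ofReal Bv :=
          setLIntegral_mono' measurableSet_Ioi hb
      _ = (∫⁻ t in Ioi T, ENNReal.ofReal (t ^ (-α⁻¹))) * ENNReal.ofReal Bv :=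
          lintegral_mul_const' _ _ ENNReal.ofReal_ne_top
      _ = ENNReal.ofReal (∫ t in Ioi T, t ^ (-α⁻¹)) * ENNReal.ofReal Bv := by
          rw [ofReal_integral_eq_lintegral_ofReal hint hnn]
      _ ≤ ENNReal.ofReal (Bv * ((α⁻¹ - 1)⁻¹ * R ^ (2 - 2*α))) := by
          rw [← ENNReal.ofReal_mul (integral_nonneg_of_ae hnn)]
          apply ENNReal.ofReal_le_ofReal
          rw [integral_Ioi_rpow_of_lt (by linarith) hT0]
          have hTval : T ^ (-α⁻¹ + 1) = R ^ (2 - 2*α) := by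
            rw [hTdef, ← Real.rpow_mul hR.le]
            congr 1
            field_simp
            ring
          rw [hTval]
          have : -R ^ (2 - 2*α) / (-α⁻¹ + 1) = R ^ (2 - 2*α) * (α⁻¹ - 1)⁻¹ := by
            rw [div_eq_mul_inv, show (-α⁻¹ + 1) = -(α⁻¹ - 1) by ring, inv_neg]
            ring
          rw [this]
          nlinarith [hRexp, hc2, hBv0]
  calc ∫⁻ t in Ioi (0:ℝ), (volume.restrict (ball (0:E2) R)) {a | t ≤ ‖a‖ ^ (-(2*α))}
      ≤ ∫⁻ t in Ioc (0:ℝ) T ∪ Ioi T,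
          (volume.restrict (ball (0:E2) R)) {a | t ≤ ‖a‖ ^ (-(2*α))} :=
        lintegral_mono_set Ioi_subset_Ioc_union_Ioi
    _ ≤ (∫⁻ t in Ioc (0:ℝ) T, (volume.restrict (ball (0:E2) R)) {a | t ≤ ‖a‖ ^ (-(2*α))}) +
          ∫⁻ t in Ioi T, (volume.restrict (ball (0:E2) R)) {a | t ≤ ‖a‖ ^ (-(2*α))} :=
        lintegral_union_le _ _ _
    _ ≤ ENNReal.ofReal (Bv * R ^ (2 - 2*α)) +
          ENNReal.ofReal (Bv * ((α⁻¹ - 1)⁻¹ * R ^ (2 - 2*α))) := add_le_add part1 part2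
    _ = ENNReal.ofReal (Bv * R ^ (2 - 2*α) + Bv * ((α⁻¹ - 1)⁻¹ * R ^ (2 - 2*α))) := by
        rw [← ENNReal.ofReal_add (by positivity) (by positivity)]
    _ ≤ ENNReal.ofReal (Bv * (1 + (α⁻¹ - 1)⁻¹) * R ^ (2 - 2*α)) := by
        apply ENNReal.ofReal_le_ofReal
        ring_nf
        nlinarith [hRexp, hc2, hBv0]

end aux

set_option maxHeartbeats 1000000 in
theorem maximal_bound_of_japanese_bracket (α : ℝ) (hα0 : 0 < α) (hα1 : α < 1) :
    ∃ C : ℝ, 0 < C ∧ ∀ x : EuclideanSpace ℝ (Fin 2),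
      maximalFn (fun y => (1 + ‖y‖ ^ 2) ^ (-α)) x ≤ C * (1 + ‖x‖ ^ 2) ^ (-α) := by
  classical
  set Bv : ℝ := (volume (ball (0 : EuclideanSpace ℝ (Fin 2)) 1)).toReal with hBv
  have hvB : volume (ball (0 : EuclideanSpace ℝ (Fin 2)) 1) = ENNReal.ofReal Bv :=
    (ENNReal.ofReal_toReal measure_ball_lt_top.ne).symm
  have hBv0 : (0:ℝ) ≤ Bv := ENNReal.toReal_nonneg
  have h1p : 1 < α⁻¹ := by
    have h := mul_inv_cancel₀ hα0.ne'
    nlinarith [inv_pos.mpr hα0]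
  have hc2 : (0:ℝ) ≤ (α⁻¹ - 1)⁻¹ := inv_nonneg.mpr (by linarith)
  set C : ℝ := 1 + 4 * Bv + 36 * (Bv * (1 + (α⁻¹ - 1)⁻¹)) with hCdef
  have hD0 : (0:ℝ) ≤ Bv * (1 + (α⁻¹ - 1)⁻¹) := by positivity
  have hC : 0 < C := by rw [hCdef]; nlinarith
  refine ⟨C, hC, fun x => ?_⟩
  have hgx : 0 < (1 + ‖x‖ ^ 2) ^ (-α) := Real.rpow_pos_of_pos (by positivity) _
  have hCg : 0 ≤ C * (1 + ‖x‖ ^ 2) ^ (-α) := mul_nonneg hC.le hgx.le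
  have hgmeas : Measurable fun y : EuclideanSpace ℝ (Fin 2) => (1 + ‖y‖ ^ 2) ^ (-α) := by
    fun_prop
  refine Real.iSup_le (fun r => Real.iSup_le (fun hr => ?_) hCg) hCg
  -- main claim
  have claim : (∫⁻ y in ball x r, ENNReal.ofReal ((1 + ‖y‖ ^ 2) ^ (-α))) ≤
      ENNReal.ofReal (C * (1 + ‖x‖ ^ 2) ^ (-α) * r ^ 2) := by
    by_cases hcase : 4 * r ^ 2 ≤ 1 + ‖x‖ ^ 2
    · -- small radius
      have hpt : ∀ y ∈ ball x r, (1 + ‖y‖ ^ 2) ^ (-α) ≤ 4 * (1 + ‖x‖ ^ 2) ^ (-α) := by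
        intro y hy
        have hd : ‖y - x‖ < r := by rw [← dist_eq_norm]; exact mem_ball.mp hy
        have h1 : ‖x‖ ≤ ‖y‖ + ‖y - x‖ := by
          have h2 := norm_sub_norm_le x y
          have h3 : ‖x - y‖ = ‖y - x‖ := norm_sub_rev x y
          linarith
        have hxy : (1 + ‖x‖ ^ 2) / 4 ≤ 1 + ‖y‖ ^ 2 := by
          nlinarith [norm_nonneg y, norm_nonneg (y - x), norm_nonneg x,
            sq_nonneg (‖y‖ - ‖y - x‖),
            mul_le_mul h1 h1 (norm_nonneg x) (by positivity),
            mul_self_le_mul_self (norm_nonneg (y - x)) hd.le]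
        calc (1 + ‖y‖ ^ 2) ^ (-α) ≤ ((1 + ‖x‖ ^ 2) / 4) ^ (-α) :=
              Real.rpow_le_rpow_of_nonpos (by positivity) hxy (neg_nonpos.mpr hα0.le)
          _ = (1 + ‖x‖ ^ 2) ^ (-α) * 4 ^ α := by
              rw [Real.div_rpow (by positivity) (by norm_num), div_eq_mul_inv,
                ← Real.rpow_neg (by norm_num : (0:ℝ) ≤ 4), neg_neg]
          _ ≤ (1 + ‖x‖ ^ 2) ^ (-α) * 4 := by
              have h44 : (4:ℝ) ^ α ≤ 4 := by
                calc (4:ℝ) ^ α ≤ (4:ℝ) ^ (1:ℝ) :=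
                      Real.rpow_le_rpow_of_exponent_le (by norm_num) hα1.le
                  _ = 4 := Real.rpow_one 4
              exact mul_le_mul_of_nonneg_left h44 hgx.le
          _ = 4 * (1 + ‖x‖ ^ 2) ^ (-α) := mul_comm _ _
      calc (∫⁻ y in ball x r, ENNReal.ofReal ((1 + ‖y‖ ^ 2) ^ (-α)))
          ≤ ∫⁻ _ in ball x r, ENNReal.ofReal (4 * (1 + ‖x‖ ^ 2) ^ (-α)) :=
            setLIntegral_mono' measurableSet_ball
              (fun y hy => ENNReal.ofReal_le_ofReal (hpt y hy))
        _ = ENNReal.ofReal (4 * (1 + ‖x‖ ^ 2) ^ (-α)) * volume (ball x r) :=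
            setLIntegral_const _ _
        _ = ENNReal.ofReal (4 * (1 + ‖x‖ ^ 2) ^ (-α)) *
              (ENNReal.ofReal (r ^ 2) * ENNReal.ofReal Bv) := by
            rw [Measure.addHaar_ball volume x hr.le, aux_finrank, hvB]
        _ = ENNReal.ofReal (4 * (1 + ‖x‖ ^ 2) ^ (-α) * (r ^ 2 * Bv)) := by
            rw [← ENNReal.ofReal_mul (by positivity), ← ENNReal.ofReal_mul (by positivity)]
        _ ≤ ENNReal.ofReal (C * (1 + ‖x‖ ^ 2) ^ (-α) * r ^ 2) := by
            apply ENNReal.ofReal_le_ofReal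
            have h4C : 4 * Bv ≤ C := by rw [hCdef]; nlinarith
            calc 4 * (1 + ‖x‖ ^ 2) ^ (-α) * (r ^ 2 * Bv)
                = (4 * Bv) * ((1 + ‖x‖ ^ 2) ^ (-α) * r ^ 2) := by ring
              _ ≤ C * ((1 + ‖x‖ ^ 2) ^ (-α) * r ^ 2) :=
                  mul_le_mul_of_nonneg_right h4C (mul_nonneg hgx.le (sq_nonneg r))
              _ = C * (1 + ‖x‖ ^ 2) ^ (-α) * r ^ 2 := by ring
    · -- large radius
      push_neg at hcase
      have hx2r : ‖x‖ < 2 * r := by nlinarith [norm_nonneg x]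
      set R : ℝ := ‖x‖ + r with hRdef
      have hR0 : 0 < R := by positivity
      have hball : ball x r ⊆ ball (0 : EuclideanSpace ℝ (Fin 2)) R := by
        intro y hy
        have hd : ‖y - x‖ < r := by rw [← dist_eq_norm]; exact mem_ball.mp hy
        have h2 := norm_sub_norm_le y x
        rw [mem_ball_zero_iff]
        linarith
      have hae : ∀ᵐ (y : EuclideanSpace ℝ (Fin 2)) ∂volume,
          ENNReal.ofReal ((1 + ‖y‖ ^ 2) ^ (-α)) ≤ ENNReal.ofReal (‖y‖ ^ (-(2*α))) := by
        have hsub : {y : EuclideanSpace ℝ (Fin 2) |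
            ¬ ENNReal.ofReal ((1 + ‖y‖ ^ 2) ^ (-α)) ≤ ENNReal.ofReal (‖y‖ ^ (-(2*α)))} ⊆
            {(0 : EuclideanSpace ℝ (Fin 2))} := by
          intro y hy
          by_contra hy0
          have hy0' : y ≠ 0 := fun h => hy0 (by simp [h])
          have hny : 0 < ‖y‖ := norm_pos_iff.mpr hy0'
          apply hy
          apply ENNReal.ofReal_le_ofReal
          have e1 : (1 + ‖y‖ ^ 2) ^ (-α) ≤ (‖y‖ ^ 2) ^ (-α) :=
            Real.rpow_le_rpow_of_nonpos (by positivity) (by nlinarith)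
              (neg_nonpos.mpr hα0.le)
          have e2 : ((‖y‖:ℝ) ^ 2) ^ (-α) = ‖y‖ ^ (-(2*α)) := by
            rw [← Real.rpow_natCast ‖y‖ 2, ← Real.rpow_mul (norm_nonneg y)]
            congr 1
            push_cast
            ring
          linarith [e2 ▸ e1]
        exact ae_iff.mpr (measure_mono_null hsub (measure_singleton _))
      calc (∫⁻ y in ball x r, ENNReal.ofReal ((1 + ‖y‖ ^ 2) ^ (-α)))
          ≤ ∫⁻ y in ball x r, ENNReal.ofReal (‖y‖ ^ (-(2*α))) :=
            lintegral_mono_ae (ae_restrict_of_ae hae)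
        _ ≤ ∫⁻ y in ball (0 : EuclideanSpace ℝ (Fin 2)) R,
              ENNReal.ofReal (‖y‖ ^ (-(2*α))) := lintegral_mono_set hball
        _ ≤ ENNReal.ofReal (Bv * (1 + (α⁻¹ - 1)⁻¹) * R ^ (2 - 2*α)) :=
            aux_key α hα0 hα1 hR0
        _ ≤ ENNReal.ofReal (C * (1 + ‖x‖ ^ 2) ^ (-α) * r ^ 2) := by
            apply ENNReal.ofReal_le_ofReal
            -- bound R ^ (2 - 2α) ≤ 36 * gx * r^2
            have hral : 0 < r ^ (2*α) := Real.rpow_pos_of_pos hr _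
            have hA : 0 < (1 + ‖x‖ ^ 2) ^ α := Real.rpow_pos_of_pos (by positivity) _
            have e1 : (1 + ‖x‖ ^ 2) ^ α ≤ 4 ^ α * r ^ (2*α) := by
              calc (1 + ‖x‖ ^ 2) ^ α ≤ (4 * r ^ 2) ^ α :=
                    Real.rpow_le_rpow (by positivity) hcase.le hα0.le
                _ = 4 ^ α * r ^ (2*α) := by
                    rw [Real.mul_rpow (by norm_num) (sq_nonneg r),
                      ← Real.rpow_natCast r 2, ← Real.rpow_mul hr.le]
                    norm_num [mul_comm]
            have h44 : (4:ℝ) ^ α ≤ 4 := by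
              calc (4:ℝ) ^ α ≤ (4:ℝ) ^ (1:ℝ) :=
                    Real.rpow_le_rpow_of_exponent_le (by norm_num) hα1.le
                _ = 4 := Real.rpow_one 4
            have h4a0 : (0:ℝ) < 4 ^ α := Real.rpow_pos_of_pos (by norm_num) _
            have e2 : r ^ (-(2*α)) ≤ 4 * (1 + ‖x‖ ^ 2) ^ (-α) := by
              have einv : r ^ (-(2*α)) = (r ^ (2*α))⁻¹ := by
                rw [Real.rpow_neg hr.le]
              have ginv : (1 + ‖x‖ ^ 2) ^ (-α) = ((1 + ‖x‖ ^ 2) ^ α)⁻¹ := by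
                rw [Real.rpow_neg (by positivity)]
              have step : (r ^ (2*α))⁻¹ ≤ 4 ^ α * ((1 + ‖x‖ ^ 2) ^ α)⁻¹ := by
                rw [← one_div, ← div_eq_mul_inv, div_le_div_iff₀ hral hA]
                nlinarith
              calc r ^ (-(2*α)) = (r ^ (2*α))⁻¹ := einv
                _ ≤ 4 ^ α * ((1 + ‖x‖ ^ 2) ^ α)⁻¹ := step
                _ ≤ 4 * ((1 + ‖x‖ ^ 2) ^ α)⁻¹ :=
                    mul_le_mul_of_nonneg_right h44 (by positivity)
                _ = 4 * (1 + ‖x‖ ^ 2) ^ (-α) := by rw [ginv]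
            have hrp : 0 ≤ r ^ (2 - 2*α) := Real.rpow_nonneg hr.le _
            have e3 : R ^ (2 - 2*α) ≤ 9 * (r ^ 2 * (4 * (1 + ‖x‖ ^ 2) ^ (-α))) := by
              have s4 : r ^ (2 - 2*α) = r ^ 2 * r ^ (-(2*α)) := by
                rw [show (2:ℝ) - 2*α = 2 + -(2*α) by ring, Real.rpow_add hr,
                  ← Real.rpow_natCast r 2]
                norm_num
              calc R ^ (2 - 2*α) ≤ (3*r) ^ (2 - 2*α) :=
                    Real.rpow_le_rpow hR0.le (by linarith) (by linarith)
                _ = 3 ^ (2 - 2*α) * r ^ (2 - 2*α) := Real.mul_rpow (by norm_num) hr.le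
                _ ≤ 9 * r ^ (2 - 2*α) := by
                    refine mul_le_mul_of_nonneg_right ?_ hrp
                    calc (3:ℝ) ^ (2 - 2*α) ≤ (3:ℝ) ^ (2:ℝ) :=
                          Real.rpow_le_rpow_of_exponent_le (by norm_num) (by linarith)
                      _ = 9 := by
                          rw [show ((2:ℝ) = ((2:ℕ):ℝ)) by norm_num, Real.rpow_natCast]
                          norm_num
                _ = 9 * (r ^ 2 * r ^ (-(2*α))) := by rw [s4]
                _ ≤ 9 * (r ^ 2 * (4 * (1 + ‖x‖ ^ 2) ^ (-α))) := by
                    have s5 : r ^ 2 * r ^ (-(2*α)) ≤ r ^ 2 * (4 * (1 + ‖x‖ ^ 2) ^ (-α)) :=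
                      mul_le_mul_of_nonneg_left e2 (sq_nonneg r)
                    linarith
            have h36C : 36 * (Bv * (1 + (α⁻¹ - 1)⁻¹)) ≤ C := by rw [hCdef]; nlinarith
            calc Bv * (1 + (α⁻¹ - 1)⁻¹) * R ^ (2 - 2*α)
                ≤ Bv * (1 + (α⁻¹ - 1)⁻¹) * (9 * (r ^ 2 * (4 * (1 + ‖x‖ ^ 2) ^ (-α)))) :=
                  mul_le_mul_of_nonneg_left e3 hD0
              _ = (36 * (Bv * (1 + (α⁻¹ - 1)⁻¹))) * ((1 + ‖x‖ ^ 2) ^ (-α) * r ^ 2) := by ring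
              _ ≤ C * ((1 + ‖x‖ ^ 2) ^ (-α) * r ^ 2) :=
                  mul_le_mul_of_nonneg_right h36C (mul_nonneg hgx.le (sq_nonneg r))
              _ = C * (1 + ‖x‖ ^ 2) ^ (-α) * r ^ 2 := by ring
  -- convert integral to lintegral
  have habs : (fun y : EuclideanSpace ℝ (Fin 2) => |(1 + ‖y‖ ^ 2) ^ (-α)|) =
      fun y : EuclideanSpace ℝ (Fin 2) => (1 + ‖y‖ ^ 2) ^ (-α) := by
    funext y
    exact abs_of_nonneg (Real.rpow_nonneg (by positivity) _)
  have hig : ∫ y in ball x r, |(1 + ‖y‖ ^ 2) ^ (-α)| =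
      (∫⁻ y in ball x r, ENNReal.ofReal ((1 + ‖y‖ ^ 2) ^ (-α))).toReal := by
    rw [show (fun y : EuclideanSpace ℝ (Fin 2) => |(1 + ‖y‖ ^ 2) ^ (-α)|) = _ from habs]
    exact integral_eq_lintegral_of_nonneg_ae
      (Filter.Eventually.of_forall fun y => Real.rpow_nonneg (by positivity) _)
      hgmeas.aestronglyMeasurable.restrict
  have hle : ∫ y in ball x r, |(1 + ‖y‖ ^ 2) ^ (-α)| ≤ C * (1 + ‖x‖ ^ 2) ^ (-α) * r ^ 2 := by
    rw [hig]
    exact ENNReal.toReal_le_of_le_ofReal (by positivity) claim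
  have hr2 : (0:ℝ) < r ^ 2 := by positivity
  calc (1 / r ^ 2) * ∫ y in ball x r, |(1 + ‖y‖ ^ 2) ^ (-α)|
      ≤ (1 / r ^ 2) * (C * (1 + ‖x‖ ^ 2) ^ (-α) * r ^ 2) := by
        exact mul_le_mul_of_nonneg_left hle (by positivity)
    _ = C * (1 + ‖x‖ ^ 2) ^ (-α) := by field_simp
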